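/- Let t ≥ 2 be an integer. For every integer i ≥ 0, the binomial coefficient C(i·2^t + 2^t − 1, 2^t − 1) ≡ 2i+1 (mod 4). -/

import Mathlib

open Nat Finset

/-- All binomial coefficients of a number whose last `t` binary digits are ones,
with lower index at most `2^t - 1`, are odd. -/
private lemma odd_choose_ones : ∀ t i m : ℕ, m ≤ 2 ^ t - 1 →
    Nat.choose (i * 2 ^ t + (2 ^ t - 1)) m % 2 = 1 := by
  intro t
  induction t with
  | zero =>
    intro i m hm
    interval_cases m
    simp
  | succ t ih =>
    intro i m hm
    haveI h2 : Fact (Nat.Prime 2) := ⟨Nat.prime_two⟩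
    have key := @Choose.choose_modEq_choose_mod_mul_choose_div_nat
        (i * 2 ^ (t + 1) + (2 ^ (t + 1) - 1)) m 2 h2
    have hpow : 2 ^ (t + 1) = 2 * 2 ^ t := by ring
    have hpos : 1 ≤ 2 ^ t := Nat.one_le_two_pow
    set n := i * 2 ^ (t + 1) + (2 ^ (t + 1) - 1) with hn
    have hn2 : n = 2 * (i * 2 ^ t + (2 ^ t - 1)) + 1 := by
      rw [hn, hpow]; ring_nf; omega
    have hmod : n % 2 = 1 := by omega
    have hdiv : n / 2 = i * 2 ^ t + (2 ^ t - 1) := by omega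
    have hm2 : m / 2 ≤ 2 ^ t - 1 := by omega
    have h1 : Nat.choose (n % 2) (m % 2) = 1 := by
      rcases Nat.mod_two_eq_zero_or_one m with h | h <;> simp [hmod, h]
    have := ih i (m / 2) hm2
    unfold Nat.ModEq at key
    rw [h1, one_mul, hdiv] at key
    omega

private lemma key_eq (t j : ℕ) (ht : 1 ≤ t) (hj : 1 ≤ j) (hjt : j ≤ 2 ^ t) :
    2 ^ t * Nat.choose (2 ^ t - 1) (j - 1) = Nat.choose (2 ^ t) j * j := by
  have h := Nat.add_one_mul_choose_eq (2 ^ t - 1) (j - 1)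
  have hpos : 1 ≤ 2 ^ t := Nat.one_le_two_pow
  have h1 : 2 ^ t - 1 + 1 = 2 ^ t := by omega
  have h2 : j - 1 + 1 = j := by omega
  rwa [h1, h2] at h

/-- For `2 ≤ t` and `0 < j < 2^t` with `j ≠ 2^(t-1)`, `4 ∣ C(2^t, j)`. -/
private lemma four_dvd_choose (t j : ℕ) (ht : 2 ≤ t) (hj0 : 0 < j) (hjlt : j < 2 ^ t)
    (hjne : j ≠ 2 ^ (t - 1)) : 4 ∣ Nat.choose (2 ^ t) j := by
  have hkey := key_eq t j (by omega) hj0 (le_of_lt hjlt)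
  have hO : Nat.choose (2 ^ t - 1) (j - 1) % 2 = 1 := by
    have := odd_choose_ones t 0 (j - 1) (by omega)
    simpa using this
  have hOne : Nat.choose (2 ^ t - 1) (j - 1) ≠ 0 := by omega
  have hCne : Nat.choose (2 ^ t) j ≠ 0 := (Nat.choose_pos (le_of_lt hjlt)).ne'
  -- take 2-adic valuations
  have hfact : (Nat.choose (2 ^ t) j).factorization 2 + j.factorization 2 = t := by
    have h1 : (2 ^ t * Nat.choose (2 ^ t - 1) (j - 1)).factorization 2
        = (Nat.choose (2 ^ t) j * j).factorization 2 := by rw [hkey]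
    rw [Nat.factorization_mul (by positivity) hOne,
        Nat.factorization_mul hCne (by omega)] at h1
    have h2 : ((2 : ℕ) ^ t).factorization 2 = t := by
      simp [Nat.Prime.factorization_pow Nat.prime_two]
    have h3 : (Nat.choose (2 ^ t - 1) (j - 1)).factorization 2 = 0 :=
      Nat.factorization_eq_zero_of_not_dvd (by omega)
    simp only [Finsupp.add_apply] at h1
    omega
  have hjval : j.factorization 2 ≤ t - 2 := by
    by_contra h
    push_neg at h
    have hd : 2 ^ (t - 1) ∣ j := by
      have := Nat.ordProj_dvd j 2
      exact dvd_trans (pow_dvd_pow 2 (by omega)) this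
    obtain ⟨c, hc⟩ := hd
    have hpos : 1 ≤ 2 ^ (t - 1) := Nat.one_le_two_pow
    have hlt : 2 ^ t = 2 * 2 ^ (t - 1) := by
      rw [← _root_.pow_succ']; congr 1; omega
    have hc2 : c < 2 := by
      by_contra hcc
      push_neg at hcc
      have : 2 ^ (t - 1) * 2 ≤ 2 ^ (t - 1) * c := Nat.mul_le_mul_left _ hcc
      omega
    interval_cases c <;> omega
  have : 2 ≤ (Nat.choose (2 ^ t) j).factorization 2 := by omega
  calc (4 : ℕ) = 2 ^ 2 := by norm_num
    _ ∣ 2 ^ (Nat.choose (2 ^ t) j).factorization 2 := pow_dvd_pow 2 this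
    _ ∣ Nat.choose (2 ^ t) j := Nat.ordProj_dvd _ 2

/-- `C(2^t, 2^(t-1)) = 2 * odd`. -/
private lemma choose_half (t : ℕ) (ht : 2 ≤ t) :
    Nat.choose (2 ^ t) (2 ^ (t - 1)) = 2 * Nat.choose (2 ^ t - 1) (2 ^ (t - 1) - 1) := by
  have hpos : 1 ≤ 2 ^ (t - 1) := Nat.one_le_two_pow
  have hlt : 2 ^ t = 2 * 2 ^ (t - 1) := by
    rw [← _root_.pow_succ']; congr 1; omega
  have hkey := key_eq t (2 ^ (t - 1)) (by omega) hpos (by omega)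
  have h : Nat.choose (2 ^ t) (2 ^ (t - 1)) * 2 ^ (t - 1)
      = (2 * Nat.choose (2 ^ t - 1) (2 ^ (t - 1) - 1)) * 2 ^ (t - 1) := by
    rw [← hkey, hlt]; ring
  exact Nat.eq_of_mul_eq_mul_right (by omega) h

/-- For an integer `t ≥ 2` and every `i ≥ 0`, the binomial coefficient
`C(i·2^t + 2^t - 1, 2^t - 1)` is congruent to `2i+1` modulo `4`. -/
theorem choose_mod_four (t : ℕ) (ht : 2 ≤ t) (i : ℕ) :
    Nat.choose (i * 2 ^ t + 2 ^ t - 1) (2 ^ t - 1) ≡ 2 * i + 1 [MOD 4] := by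
  have hpos : 1 ≤ 2 ^ t := Nat.one_le_two_pow
  have hhalf : 1 ≤ 2 ^ (t - 1) := Nat.one_le_two_pow
  have hlt : 2 ^ t = 2 * 2 ^ (t - 1) := by
    rw [← _root_.pow_succ']; congr 1; omega
  induction i with
  | zero => simpa using Nat.ModEq.refl 1
  | succ i ih =>
    set k := 2 ^ t - 1 with hk
    have harg : (i + 1) * 2 ^ t + 2 ^ t - 1 = 2 ^ t + (i * 2 ^ t + k) := by
      rw [hk]; ring_nf; omega
    have harg2 : i * 2 ^ t + 2 ^ t - 1 = i * 2 ^ t + k := by omega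
    rw [harg]
    rw [harg2] at ih
    set n := i * 2 ^ t + k with hn
    rw [← ZMod.natCast_eq_natCast_iff]
    rw [Nat.add_choose_eq, Finset.Nat.sum_antidiagonal_eq_sum_range_succ_mk, Nat.cast_sum]
    simp only [Nat.cast_mul]
    have hsub : ({0, 2 ^ (t - 1)} : Finset ℕ) ⊆ Finset.range (k + 1) := by
      intro x hx
      simp only [Finset.mem_insert, Finset.mem_singleton] at hx
      rcases hx with h | h <;> simp [h, Finset.mem_range] <;> omega
    have hzero : ∀ j ∈ Finset.range (k + 1), j ∉ ({0, 2 ^ (t - 1)} : Finset ℕ) →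
        ((Nat.choose (2 ^ t) j : ZMod 4) * (Nat.choose n (k - j) : ZMod 4)) = 0 := by
      intro j hjr hjn
      simp only [Finset.mem_insert, Finset.mem_singleton, not_or] at hjn
      simp only [Finset.mem_range] at hjr
      have h4 : (4 : ℕ) ∣ Nat.choose (2 ^ t) j :=
        four_dvd_choose t j ht (by omega) (by omega) hjn.2
      rw [(ZMod.natCast_eq_zero_iff _ 4).mpr h4, zero_mul]
    rw [← Finset.sum_subset hsub (fun j h1 h2 => hzero j h1 h2)]
    have hne : (0 : ℕ) ≠ 2 ^ (t - 1) := by omega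
    rw [Finset.sum_pair hne]
    have hterm0 : ((Nat.choose (2 ^ t) 0 : ZMod 4) * (Nat.choose n (k - 0) : ZMod 4))
        = ((2 * i + 1 : ℕ) : ZMod 4) := by
      simp only [Nat.choose_zero_right, Nat.cast_one, one_mul, Nat.sub_zero]
      rw [ZMod.natCast_eq_natCast_iff]
      exact ih
    have hterm1 : ((Nat.choose (2 ^ t) (2 ^ (t - 1)) : ZMod 4)
        * (Nat.choose n (k - 2 ^ (t - 1)) : ZMod 4)) = ((2 : ℕ) : ZMod 4) := by
      rw [← Nat.cast_mul, ZMod.natCast_eq_natCast_iff]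
      have hksub : k - 2 ^ (t - 1) = 2 ^ (t - 1) - 1 := by omega
      have hB : Nat.choose n (k - 2 ^ (t - 1)) % 2 = 1 := by
        rw [hksub, hn, hk]
        exact odd_choose_ones t i (2 ^ (t - 1) - 1) (by omega)
      have hA := choose_half t ht
      have hO : Nat.choose (2 ^ t - 1) (2 ^ (t - 1) - 1) % 2 = 1 := by
        have := odd_choose_ones t 0 (2 ^ (t - 1) - 1) (by omega)
        simpa using this
      set B := Nat.choose n (k - 2 ^ (t - 1))
      set O := Nat.choose (2 ^ t - 1) (2 ^ (t - 1) - 1)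
      have hOB : (O * B) % 2 = 1 := by
        rw [Nat.mul_mod, hO, hB]
      have : Nat.choose (2 ^ t) (2 ^ (t - 1)) * B = 2 * (O * B) := by
        rw [hA]; ring
      rw [this]
      unfold Nat.ModEq
      omega
    rw [hterm0, hterm1, ← Nat.cast_add]
    rw [ZMod.natCast_eq_natCast_iff]
    have : 2 * i + 1 + 2 = 2 * (i + 1) + 1 := by ring
    rw [this]
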